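/- For every integer n ≥ 3 and all indices 1 ≤ i, j ≤ n−2, the matrix obtained from the leftover matrix L^n by deleting its first row and first column equals the leftover matrix L^{n−1} with the variable substitution (x_1, x_2, …, x_{n−1}) ↦ (x_1x_2, x_3, …, x_n); that is, L^n_{i+1, j+1} = L^{n−1}_{i,j} evaluated at the variables (x_1x_2, x_3, x_4, …, x_n). -/

import Mathlib

open MvPolynomial

/-- The leftover matrix `L^n`: the symmetric `(n-1) × (n-1)` matrix over
`ℤ[x_1, …, x_n]` whose `(i, j)` entry (in 1-based terms, for `i ≤ j`) is
`(∏_{a=i+1}^{j} x_a) · (1 − ∏_{a=1}^{i} x_a²) · (1 − ∏_{a=j+1}^{n} x_a²)`.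
Here the indices of `Fin (n-1)` and `Fin n` are 0-based. -/
noncomputable def leftover (n : ℕ) :
    Matrix (Fin (n - 1)) (Fin (n - 1)) (MvPolynomial (Fin n) ℤ) :=
  Matrix.of fun i j =>
    (∏ a : Fin n, if min i.val j.val < a.val ∧ a.val ≤ max i.val j.val then X a else 1) *
      (1 - ∏ a : Fin n, if a.val ≤ min i.val j.val then X a ^ 2 else 1) *
      (1 - ∏ a : Fin n, if max i.val j.val < a.val then X a ^ 2 else 1)


private lemma key_prod {M : Type*} [CommMonoid M] (m : ℕ) (f : Fin (m + 2) → M)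
    (g : Fin (m + 1) → M) (h0 : g 0 = f 0 * f 1)
    (hs : ∀ k : Fin m, g k.succ = f k.succ.succ) :
    ∏ a, f a = ∏ k, g k := by
  rw [Fin.prod_univ_succ f, Fin.prod_univ_succ (fun a : Fin (m + 1) => f a.succ),
    Fin.prod_univ_succ g, h0, mul_assoc, Fin.succ_zero_eq_one]
  exact congrArg _ (congrArg _ (Finset.prod_congr rfl fun k _ => (hs k).symm))

/-- For `n ≥ 3`, the matrix obtained from `L^n` by deleting its first row and first
column is `L^{n-1}` with the variable substitution
`(x_1, x_2, …, x_{n-1}) ↦ (x_1 x_2, x_3, …, x_n)`; entrywise (0-based indices):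
`L^n_{i+1, j+1}` equals the substitution applied to `L^{n-1}_{i, j}`. -/
theorem leftover_delete_first_row_col (n : ℕ) (hn : 3 ≤ n) (i j : Fin (n - 1 - 1)) :
    leftover n ⟨i.val + 1, by have := i.isLt; omega⟩ ⟨j.val + 1, by have := j.isLt; omega⟩ =
      MvPolynomial.aeval
        (fun k : Fin (n - 1) =>
          if k.val = 0 then
            X (⟨0, by omega⟩ : Fin n) * X (⟨1, by omega⟩ : Fin n)
          else
            X (⟨k.val + 1, by have := k.isLt; omega⟩ : Fin n))
        (leftover (n - 1) i j) := by
  obtain ⟨m, rfl⟩ : ∃ m, n = m + 2 := ⟨n - 2, by omega⟩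
  simp only [leftover, Matrix.of_apply, map_mul, map_sub, map_one, map_prod,
    apply_ite (MvPolynomial.aeval _), map_pow, aeval_X]
  have hi := i.isLt
  have hj := j.isLt
  have e1 : (∏ x : Fin (m + 2),
        if (i.val + 1) ⊓ (j.val + 1) < (x : ℕ) ∧ (x : ℕ) ≤ (i.val + 1) ⊔ (j.val + 1)
          then (X x : MvPolynomial (Fin (m + 2)) ℤ) else 1) =
      ∏ x : Fin (m + 1),
        if i.val ⊓ j.val < (x : ℕ) ∧ (x : ℕ) ≤ i.val ⊔ j.val then
          (if (x : ℕ) = 0 then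
            X (⟨0, by omega⟩ : Fin (m + 2)) * X (⟨1, by omega⟩ : Fin (m + 2))
          else X (⟨(x : ℕ) + 1, by have := x.isLt; omega⟩ : Fin (m + 2)))
        else 1 := by
    refine key_prod m _ _ ?_ fun k => ?_
    · simp only [Fin.val_zero, Fin.val_one]
      split_ifs <;>
        first | rfl | omega | simp [mul_pow, Fin.mk_zero, Fin.mk_one]
    · simp only [Fin.val_succ]
      split_ifs <;> first | rfl | contradiction | omega
  have e2 : (∏ x : Fin (m + 2),
        if (x : ℕ) ≤ (i.val + 1) ⊓ (j.val + 1)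
          then (X x : MvPolynomial (Fin (m + 2)) ℤ) ^ 2 else 1) =
      ∏ x : Fin (m + 1),
        if (x : ℕ) ≤ i.val ⊓ j.val then
          (if (x : ℕ) = 0 then
            X (⟨0, by omega⟩ : Fin (m + 2)) * X (⟨1, by omega⟩ : Fin (m + 2))
          else X (⟨(x : ℕ) + 1, by have := x.isLt; omega⟩ : Fin (m + 2))) ^ 2
        else 1 := by
    refine key_prod m _ _ ?_ fun k => ?_
    · simp only [Fin.val_zero, Fin.val_one]
      split_ifs <;>
        first | with_reducible rfl | omega | simp [mul_pow, Fin.mk_zero, Fin.mk_one]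
    · simp only [Fin.val_succ]
      split_ifs <;> first | rfl | contradiction | omega
  have e3 : (∏ x : Fin (m + 2),
        if (i.val + 1) ⊔ (j.val + 1) < (x : ℕ)
          then (X x : MvPolynomial (Fin (m + 2)) ℤ) ^ 2 else 1) =
      ∏ x : Fin (m + 1),
        if i.val ⊔ j.val < (x : ℕ) then
          (if (x : ℕ) = 0 then
            X (⟨0, by omega⟩ : Fin (m + 2)) * X (⟨1, by omega⟩ : Fin (m + 2))
          else X (⟨(x : ℕ) + 1, by have := x.isLt; omega⟩ : Fin (m + 2))) ^ 2
        else 1 := by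
    refine key_prod m _ _ ?_ fun k => ?_
    · simp only [Fin.val_zero, Fin.val_one]
      split_ifs <;>
        first | rfl | omega | simp [mul_pow, Fin.mk_zero, Fin.mk_one]
    · simp only [Fin.val_succ]
      split_ifs <;> first | rfl | contradiction | omega
  exact congrArg₂ (· * ·) (congrArg₂ (· * ·) e1 (congrArg (1 - ·) e2)) (congrArg (1 - ·) e3)
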